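/- Define on ℝ¹¹ the maps T = t, X₁ = x₁ - (C/3)y₁, Y₁ = y₁, X₂ = x₂ - (C/3)y₂, Y₂ = y₂, X₃ = x₃(1 - (C/3)y₃)⁻¹, Y₃ = y₃(1 - (C/3)y₃)⁻¹, X₄ = x₄(1 - (C/3)y₃)⁻² + (C/3)x₃(1 + y₄)(1 - (C/3)y₃)⁻³, Y₄ = (1 + y₄)(1 - (C/3)y₃)⁻³ - 1, with f = 1 - (C/3)y₃. Then (∂Y₄/∂x₂ + ∂Y₄/∂y₃)(0) = C and f(0) = 1, and the identity x₃∂Y₃/∂t + x₂x₃∂Y₃/∂x₁ + y₂x₃∂Y₃/∂y₁ + ∂Y₃/∂x₂ + y₃∂Y₃/∂y₂ + x₄∂Y₃/∂x₃ + (1+y₄)∂Y₃/∂y₃ = f·(1 + Y₄) holds identically near 0. -/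

import Mathlib

/-- ℝ¹¹ with coordinates t, x₁, y₁, x₂, y₂, x₃, y₃, x₄, y₄, x₅, y₅ (indices 0,…,10). -/
abbrev E11 := Fin 11 → ℝ

/-- Partial derivative in the i-th coordinate direction. -/
noncomputable def pd (i : Fin 11) (F : E11 → ℝ) : E11 → ℝ :=
  fun v => fderiv ℝ F v (Pi.single i 1)

noncomputable def T (_C : ℝ) : E11 → ℝ := fun v => v 0
noncomputable def X₁ (C : ℝ) : E11 → ℝ := fun v => v 1 - C / 3 * v 2
noncomputable def Y₁ (_C : ℝ) : E11 → ℝ := fun v => v 2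
noncomputable def X₂ (C : ℝ) : E11 → ℝ := fun v => v 3 - C / 3 * v 4
noncomputable def Y₂ (_C : ℝ) : E11 → ℝ := fun v => v 4
noncomputable def X₃ (C : ℝ) : E11 → ℝ := fun v => v 5 * (1 - C / 3 * v 6)⁻¹
noncomputable def Y₃ (C : ℝ) : E11 → ℝ := fun v => v 6 * (1 - C / 3 * v 6)⁻¹
noncomputable def X₄ (C : ℝ) : E11 → ℝ := fun v =>
  v 7 * ((1 - C / 3 * v 6)⁻¹) ^ 2 +
    C / 3 * v 5 * (1 + v 8) * ((1 - C / 3 * v 6)⁻¹) ^ 3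
noncomputable def Y₄ (C : ℝ) : E11 → ℝ := fun v =>
  (1 + v 8) * ((1 - C / 3 * v 6)⁻¹) ^ 3 - 1
noncomputable def ff (C : ℝ) : E11 → ℝ := fun v => 1 - C / 3 * v 6

open ContinuousLinearMap in
lemma hasFDerivAt_Y₃ (C : ℝ) (v : E11) (h : 1 - C / 3 * v 6 ≠ 0) :
    HasFDerivAt (Y₃ C)
      ((((1 - C / 3 * v 6)⁻¹) ^ 2) • (proj 6 : E11 →L[ℝ] ℝ)) v := by
  have h' : (3 : ℝ) - C * v 6 ≠ 0 := by
    intro hh; apply h; linarith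
  have h1 : HasDerivAt (fun y : ℝ => 1 - C / 3 * y) (-(C / 3)) (v 6) := by
    have := (hasDerivAt_const (v 6) (1 : ℝ)).sub
      ((hasDerivAt_id (v 6)).const_mul (C / 3))
    exact this.congr_deriv (by simp)
  have h2 := (hasDerivAt_id (v 6)).mul (h1.inv h)
  have h3 : HasDerivAt (fun y : ℝ => y * (1 - C / 3 * y)⁻¹)
      (((1 - C / 3 * v 6)⁻¹) ^ 2) (v 6) := by
    refine h2.congr_deriv ?_
    simp only [Pi.inv_apply, id]
    field_simp [h, h']
    ring
  exact h3.comp_hasFDerivAt v (proj 6 : E11 →L[ℝ] ℝ).hasFDerivAt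

open ContinuousLinearMap in
lemma hasFDerivAt_Y₄0 (C : ℝ) :
    HasFDerivAt (Y₄ C)
      (C • (proj 6 : E11 →L[ℝ] ℝ) + (proj 8 : E11 →L[ℝ] ℝ)) 0 := by
  have hA : HasFDerivAt (fun v : E11 => 1 + v 8) (proj 8 : E11 →L[ℝ] ℝ) 0 := by
    have := (hasFDerivAt_const (1 : ℝ) (0 : E11)).add
      (proj 8 : E11 →L[ℝ] ℝ).hasFDerivAt
    exact this.congr_fderiv (by simp)
  have h1 : HasDerivAt (fun y : ℝ => 1 - C / 3 * y) (-(C / 3)) ((0 : E11) 6) := by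
    have := (hasDerivAt_const ((0 : E11) 6) (1 : ℝ)).sub
      ((hasDerivAt_id ((0 : E11) 6)).const_mul (C / 3))
    exact this.congr_deriv (by simp)
  have hne : (1 : ℝ) - C / 3 * (0 : E11) 6 ≠ 0 := by simp
  have h2 := (h1.inv hne).pow 3
  have h3 : HasDerivAt (fun y : ℝ => ((1 - C / 3 * y)⁻¹) ^ 3) C ((0 : E11) 6) := by
    refine h2.congr_deriv ?_
    simp
    ring
  have hB : HasFDerivAt (fun v : E11 => ((1 - C / 3 * v 6)⁻¹) ^ 3)
      (C • (proj 6 : E11 →L[ℝ] ℝ)) 0 :=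
    by have := h3.comp_hasFDerivAt (0 : E11) (proj 6 : E11 →L[ℝ] ℝ).hasFDerivAt; exact this
  have hAB := (hA.mul hB).sub_const 1
  refine hAB.congr_fderiv ?_
  simp

/-- The explicit formulas for the conjugating diffeomorphism of the orbit
1.2.1_{-s,tan}.1_{-s,tan}: (∂Y₄/∂x₂ + ∂Y₄/∂y₃)(0) = C, f(0) = 1, and the
conjugacy identity
`x₃∂Y₃/∂t + x₂x₃∂Y₃/∂x₁ + y₂x₃∂Y₃/∂y₁ + ∂Y₃/∂x₂ + y₃∂Y₃/∂y₂ + x₄∂Y₃/∂x₃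
  + (1+y₄)∂Y₃/∂y₃ = f·(1 + Y₄)` holds identically near 0. -/
theorem conjugacy_formulas_tan_tan (C : ℝ) :
    pd 3 (Y₄ C) 0 + pd 6 (Y₄ C) 0 = C ∧
    ff C 0 = 1 ∧
    ∀ᶠ v : E11 in nhds 0,
      v 5 * pd 0 (Y₃ C) v + v 3 * v 5 * pd 1 (Y₃ C) v +
        v 4 * v 5 * pd 2 (Y₃ C) v + pd 3 (Y₃ C) v + v 6 * pd 4 (Y₃ C) v +
        v 7 * pd 5 (Y₃ C) v + (1 + v 8) * pd 6 (Y₃ C) v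
      = ff C v * (1 + Y₄ C v) := by
  refine ⟨?_, by simp [ff], ?_⟩
  · have h := (hasFDerivAt_Y₄0 C).fderiv
    simp [pd, h, Pi.single_apply]
  · have hcont : ContinuousAt (fun v : E11 => 1 - C / 3 * v 6) 0 :=
      (continuous_const.sub (continuous_const.mul (continuous_apply 6))).continuousAt
    have hne : ∀ᶠ v : E11 in nhds 0, 1 - C / 3 * v 6 ≠ 0 := by
      apply hcont.eventually_ne
      simp
    filter_upwards [hne] with v hv
    have hv' : (3 : ℝ) - C * v 6 ≠ 0 := by
      intro hh; apply hv; linarith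
    have h := (hasFDerivAt_Y₃ C v hv).fderiv
    simp only [pd, h]
    simp [ff, Y₄, Pi.single_apply]
    field_simp [hv, hv']
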